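/- Let f : (0,∞) × ℝ → ℂ be smooth in the space variable (C^k in x for every t > 0). With 𝒯(f)(t,x) := t^{−1/2} e^{i x²/(4t)} \overline{f}(1/t, x/t) and J(f)(t,x) := (x/2 + i t ∂_x) f(t,x), one has for every k ∈ ℕ and all (t,x) ∈ (0,∞) × ℝ the identity ∂_x^k (𝒯 f)(t,x) = 𝒯((−i)^k J^k f)(t,x), where J^k denotes the k-fold composition of J. -/

import Mathlib

noncomputable section

/-- The pseudo-conformal transformation
`𝒯(f)(t,x) = t^{−1/2} e^{i x²/(4t)} conj(f)(1/t, x/t)`. -/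
def pct (f : ℝ → ℝ → ℂ) (t x : ℝ) : ℂ :=
  ((1 / Real.sqrt t : ℝ) : ℂ) * Complex.exp (Complex.I * (x : ℂ) ^ 2 / (4 * (t : ℂ))) *
    (starRingEnd ℂ) (f (1 / t) (x / t))

/-- The pseudo-conformal operator `J(f)(t,x) = (x/2 + i t ∂_x) f(t,x)`. -/
def Jop (f : ℝ → ℝ → ℂ) : ℝ → ℝ → ℂ :=
  fun t x => ((x : ℂ) / 2) * f t x + Complex.I * (t : ℂ) * deriv (fun y => f t y) x

lemma deriv_pct (g : ℝ → ℝ → ℂ) (t : ℝ) (ht : 0 < t)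
    (hg : Differentiable ℝ (fun x => g (1 / t) x)) (x : ℝ) :
    deriv (fun y => pct g t y) x = pct (fun s y => -Complex.I * Jop g s y) t x := by
  have ht' : (t : ℂ) ≠ 0 := by exact_mod_cast ht.ne'
  have hE : HasDerivAt (fun y : ℝ => Complex.exp (Complex.I * (y : ℂ) ^ 2 / (4 * (t : ℂ))))
      (Complex.exp (Complex.I * (x : ℂ) ^ 2 / (4 * (t : ℂ))) * (Complex.I * (x : ℂ) / (2 * t))) x := by
    have h0 : HasDerivAt (fun y : ℝ => (y : ℂ)) 1 x := Complex.ofRealCLM.hasDerivAt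
    have h1 : HasDerivAt (fun y : ℝ => (y : ℂ) ^ 2) (2 * (x : ℂ)) x := by
      simpa using (hasDerivAt_pow 2 (x : ℂ)).comp_ofReal
    have h2 : HasDerivAt (fun y : ℝ => Complex.I * (y : ℂ) ^ 2 / (4 * (t : ℂ)))
        (Complex.I * (2 * (x : ℂ)) / (4 * (t : ℂ))) x := by
      simpa [mul_div_assoc] using (h1.const_mul Complex.I).div_const (4 * (t : ℂ))
    have := h2.cexp
    convert this using 1
    field_simp
    ring
  have hgx : HasDerivAt (fun y : ℝ => g (1 / t) (y / t))
      (deriv (fun y => g (1 / t) y) (x / t) * (1 / t)) x := by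
    have hinner : HasDerivAt (fun y : ℝ => y / t) (1 / t) x := by
      simpa [one_div] using (hasDerivAt_id x).div_const t
    have h2 : HasDerivAt (fun z : ℝ => g (1 / t) z) (deriv (fun y => g (1 / t) y) (x / t))
        ((fun y : ℝ => y / t) x) := (hg (x / t)).hasDerivAt
    have h3 := HasDerivAt.scomp x h2 hinner
    simpa [Function.comp_def, Complex.real_smul, mul_comm] using h3
  have hC : HasDerivAt (fun y : ℝ => (starRingEnd ℂ) (g (1 / t) (y / t)))
      ((starRingEnd ℂ) (deriv (fun y => g (1 / t) y) (x / t) * (1 / t))) x := by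
    simpa using hgx.star
  have hfull : HasDerivAt (fun y : ℝ => pct g t y)
      (((1 / Real.sqrt t : ℝ) : ℂ) *
        ((Complex.exp (Complex.I * (x : ℂ) ^ 2 / (4 * (t : ℂ))) * (Complex.I * (x : ℂ) / (2 * t))) *
          (starRingEnd ℂ) (g (1 / t) (x / t)) +
          Complex.exp (Complex.I * (x : ℂ) ^ 2 / (4 * (t : ℂ))) *
            (starRingEnd ℂ) (deriv (fun y => g (1 / t) y) (x / t) * (1 / t)))) x := by
    have := ((hE.mul hC).const_mul (((1 / Real.sqrt t : ℝ) : ℂ)))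
    simpa [pct, mul_assoc, mul_add] using this
  rw [hfull.deriv]
  simp only [pct, Jop, map_mul, map_add, map_neg, Complex.conj_I, map_ofNat, map_div₀,
    Complex.conj_ofReal, map_one]
  push_cast
  linear_combination (1 / ((Real.sqrt t : ℝ) : ℂ) * Complex.exp (Complex.I * (x : ℂ) ^ 2 / (4 * (t : ℂ))) *
    (starRingEnd ℂ) (deriv (fun y => g (1 / t) y) (x / t)) * (1 / (t : ℂ))) * Complex.I_sq

lemma Jop_smooth (f : ℝ → ℝ → ℂ)
    (hf : ∀ t : ℝ, 0 < t → ContDiff ℝ (⊤ : ℕ∞) (fun x => f t x)) :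
    ∀ k : ℕ, ∀ t : ℝ, 0 < t → ContDiff ℝ (⊤ : ℕ∞) (fun x => (Jop^[k] f) t x) := by
  intro k
  induction k with
  | zero => simpa using hf
  | succ k ih =>
    intro t ht
    rw [Function.iterate_succ_apply']
    have h1 : ContDiff ℝ (⊤ : ℕ∞) (fun x => (Jop^[k] f) t x) := ih t ht
    have hd : ContDiff ℝ (⊤ : ℕ∞) (deriv (fun y => (Jop^[k] f) t y)) :=
      (contDiff_infty_iff_deriv.mp h1).2
    have hx : ContDiff ℝ (⊤ : ℕ∞) (fun x : ℝ => ((x : ℂ) / 2)) :=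
      Complex.ofRealCLM.contDiff.div_const 2
    exact (hx.mul h1).add (contDiff_const.mul hd)

/-- For `f` smooth in the space variable,
`∂_x^k (𝒯 f)(t,x) = 𝒯((−i)^k J^k f)(t,x)` for every `k` and all `t > 0`, `x ∈ ℝ`. -/
theorem iteratedDeriv_pct_eq_pct_Jiter (f : ℝ → ℝ → ℂ)
    (hf : ∀ t : ℝ, 0 < t → ContDiff ℝ (⊤ : ℕ∞) (fun x => f t x)) :
    ∀ k : ℕ, ∀ t : ℝ, 0 < t → ∀ x : ℝ,
      iteratedDeriv k (fun y => pct f t y) x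
        = pct (fun s y => (-Complex.I) ^ k * (Jop^[k] f) s y) t x := by
  intro k
  induction k with
  | zero => intro t ht x; simp [pct]
  | succ k ih =>
    intro t ht x
    rw [iteratedDeriv_succ]
    have hfun : iteratedDeriv k (fun y => pct f t y)
        = fun y => pct (fun s y => (-Complex.I) ^ k * (Jop^[k] f) s y) t y := by
      funext y; exact ih t ht y
    rw [hfun]
    have hdiff : Differentiable ℝ (fun x => (-Complex.I) ^ k * (Jop^[k] f) (1 / t) x) := by
      have h := (Jop_smooth f hf k (1 / t) (by positivity)).differentiable
        (by simp)
      exact h.const_mul _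
    rw [deriv_pct _ t ht hdiff x]
    have harg : (fun s y => -Complex.I * Jop (fun s y => (-Complex.I) ^ k * (Jop^[k] f) s y) s y)
        = fun s y => (-Complex.I) ^ (k + 1) * (Jop^[k + 1] f) s y := by
      funext s y
      simp only [Jop, deriv_const_mul_field, Function.iterate_succ_apply']
      ring
    rw [harg]
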